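/- Let h_1, …, h_n > 0, x* ∈ ℝ, and let B_t be i.i.d. batches drawn uniformly from the size-B subsets of {1,…,n}. Consider the linearized SGD iterates x̃_{t+1} = x̃_t − (η/B)·Σ_{i∈B_t} h_i·(x̃_t − x*) with step size η > 0. Define h = (1/n)Σ_{i=1}^n h_i, s² = (1/n)Σ_{i=1}^n (h_i − h)², and p = (n − B)/(B(n − 1)). Then for every initial point x̃_0, the sequence E[(x̃_t − x*)²] is bounded in t if and only if η ≤ 2h/(h² + p·s²). -/

import Mathlib

open MeasureTheory ProbabilityTheory Filter
open scoped ENNReal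

/-- Discrete measurable structure on batches (finite sets of sample indices). -/
instance finsetMeasurableSpace {α : Type*} : MeasurableSpace (Finset α) := ⊤

lemma count_superset {α : Type*} [DecidableEq α] (s T : Finset α) (hT : T ⊆ s) (k : ℕ)
    (hk : T.card ≤ k) :
    ((s.powersetCard k).filter (fun S => T ⊆ S)).card = (s.card - T.card).choose (k - T.card) := by
  rw [← Finset.card_sdiff_of_subset hT, ← Finset.card_powersetCard]
  refine Finset.card_bij' (fun S _ => S \ T) (fun U _ => U ∪ T) ?_ ?_ ?_ ?_
  · intro S hS
    rw [Finset.mem_filter, Finset.mem_powersetCard] at hS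
    rw [Finset.mem_powersetCard]
    exact ⟨Finset.sdiff_subset_sdiff hS.1.1 le_rfl,
      by rw [Finset.card_sdiff_of_subset hS.2, hS.1.2]⟩
  · intro U hU
    rw [Finset.mem_powersetCard] at hU
    have hdisj : Disjoint U T := Finset.disjoint_of_subset_left hU.1 Finset.sdiff_disjoint
    rw [Finset.mem_filter, Finset.mem_powersetCard]
    refine ⟨⟨Finset.union_subset (hU.1.trans (Finset.sdiff_subset)) hT, ?_⟩,
      Finset.subset_union_right⟩
    rw [Finset.card_union_of_disjoint hdisj, hU.2, Nat.sub_add_cancel hk]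
  · intro S hS
    rw [Finset.mem_filter] at hS
    exact Finset.sdiff_union_of_subset hS.2
  · intro U hU
    rw [Finset.mem_powersetCard] at hU
    have hdisj : Disjoint U T := Finset.disjoint_of_subset_left hU.1 Finset.sdiff_disjoint
    exact Finset.union_sdiff_cancel_right hdisj

/-- **Exact mean-square linear stability threshold of SGD (univariate, Wu et al.).**
With sample curvatures `h i > 0`, batches of size `B` drawn uniformly (and
independently across time) from the size-`B` subsets of `{1,…,n}`, and the
linearized iterates `x̃_{t+1} = x̃_t − (η/B) (∑_{i ∈ B_t} h_i)(x̃_t − x*)`, the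
second moment `E[(x̃_t − x*)²]` is bounded for every initial point iff
`η ≤ 2h̄/(h̄² + p s²)`, with `h̄ = (1/n)∑ h_i`, `s² = (1/n)∑ (h_i − h̄)²`,
`p = (n − B)/(B(n − 1))`. -/
theorem stmt6 {n B : ℕ} (hB : 0 < B) (hBn : B ≤ n)
    (h : Fin n → ℝ) (hpos : ∀ i, 0 < h i) (xstar : ℝ) (η : ℝ) (hη : 0 < η)
    {Ω : Type*} [MeasurableSpace Ω] (μ : Measure Ω) [IsProbabilityMeasure μ]
    (Bt : ℕ → Ω → Finset (Fin n)) (hmeas : ∀ t, Measurable (Bt t))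
    (hindep : iIndepFun (m := fun _ => finsetMeasurableSpace) Bt μ)
    (hunif : ∀ t (S : Finset (Fin n)), μ {ω | Bt t ω = S} =
      if S.card = B then ((n.choose B : ℝ≥0∞))⁻¹ else 0) :
    (∀ (x0 : ℝ) (x : ℕ → Ω → ℝ), (∀ ω, x 0 ω = x0) →
        (∀ t ω, x (t + 1) ω =
          x t ω - η / B * (∑ i ∈ Bt t ω, h i) * (x t ω - xstar)) →
        ∃ C : ℝ, ∀ t : ℕ, ∫ ω, (x t ω - xstar) ^ 2 ∂μ ≤ C) ↔
      η ≤ 2 * ((∑ i, h i) / n) /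
        (((∑ i, h i) / n) ^ 2 +
          ((n : ℝ) - B) / (B * ((n : ℝ) - 1)) *
            ((∑ i, (h i - (∑ j, h j) / n) ^ 2) / n)) := by
  classical
  have hn : 0 < n := lt_of_lt_of_le hB hBn
  have hn0 : (n : ℝ) ≠ 0 := Nat.cast_ne_zero.2 hn.ne'
  have hB0 : (0:ℝ) < B := by exact_mod_cast hB
  haveI : MeasurableSingletonClass (Finset (Fin n)) := ⟨fun _ => trivial⟩
  set c : ℝ := η / B with hc
  have hc_pos : 0 < c := div_pos hη hB0
  set g : Finset (Fin n) → ℝ := fun S => (1 - c * ∑ i ∈ S, h i) ^ 2 with hgdef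
  have hg_meas : Measurable g := measurable_from_top
  set P : Finset (Finset (Fin n)) := Finset.powersetCard B Finset.univ with hP
  set Cnb : ℝ := (n.choose B : ℝ) with hCnb
  have hCnb_pos : 0 < Cnb := by
    rw [hCnb]
    exact_mod_cast Nat.choose_pos hBn
  set a : ℝ := Cnb⁻¹ * ∑ S ∈ P, g S with ha
  have ha_nonneg : 0 ≤ a :=
    mul_nonneg (inv_nonneg.2 hCnb_pos.le) (Finset.sum_nonneg fun S _ => sq_nonneg _)
  set H1 : ℝ := ∑ i, h i with hH1
  set H2 : ℝ := ∑ i, (h i) ^ 2 with hH2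
  set N1 : ℝ := ((n-1).choose (B-1) : ℝ) with hN1def
  -- basic counting
  have hcount1 : ∀ i : Fin n, (P.filter (fun S => i ∈ S)).card = (n-1).choose (B-1) := by
    intro i
    have e := count_superset Finset.univ {i} (Finset.subset_univ _) B
      (by simp; omega)
    rw [Finset.card_univ, Fintype.card_fin, Finset.card_singleton] at e
    rw [← e, hP]
    congr 1
    apply Finset.filter_congr
    intro S _
    simp [Finset.singleton_subset_iff]
  have hN1 : N1 * n = Cnb * B := by
    have e1 : n * (n-1).choose (B-1) = n.choose B * B := by
      have := Nat.add_one_mul_choose_eq (n-1) (B-1)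
      have h1 : n - 1 + 1 = n := Nat.succ_pred_eq_of_pos hn
      have h2 : B - 1 + 1 = B := Nat.succ_pred_eq_of_pos hB
      rw [h1, h2] at this
      exact this
    have := congrArg (Nat.cast : ℕ → ℝ) e1
    push_cast at this
    rw [hN1def, hCnb]
    linarith
  obtain ⟨N2, hcount2, hN2⟩ : ∃ N2 : ℕ,
      (∀ i j : Fin n, i ≠ j → (P.filter (fun S => i ∈ S ∧ j ∈ S)).card = N2) ∧
      ((N2 : ℝ) * ((n:ℝ) * ((n:ℝ) - 1)) = Cnb * B * ((B:ℝ) - 1)) := by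
    rcases eq_or_lt_of_le (show 1 ≤ B from hB) with hB1 | hB2
    · refine ⟨0, fun i j hij => ?_, by rw [← hB1]; push_cast; ring⟩
      rw [Finset.card_eq_zero, Finset.filter_eq_empty_iff]
      intro S hS
      rw [hP, Finset.mem_powersetCard] at hS
      intro hmem
      have : ({i, j} : Finset (Fin n)) ⊆ S := by
        rw [Finset.insert_subset_iff, Finset.singleton_subset_iff]; exact hmem
      have hcard2 : ({i, j} : Finset (Fin n)).card = 2 := by
        rw [Finset.card_insert_of_notMem (by simpa using hij), Finset.card_singleton]
      have := Finset.card_le_card this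
      rw [hcard2, hS.2, ← hB1] at this
      omega
    · have hB2' : 2 ≤ B := hB2
      have hn2 : 2 ≤ n := le_trans hB2' hBn
      refine ⟨(n-2).choose (B-2), fun i j hij => ?_, ?_⟩
      · have e := count_superset Finset.univ {i, j} (Finset.subset_univ _) B
          (by
            rw [Finset.card_insert_of_notMem (by simpa using hij), Finset.card_singleton]
            exact hB2')
        rw [Finset.card_univ, Fintype.card_fin,
          Finset.card_insert_of_notMem (by simpa using hij), Finset.card_singleton] at e
        rw [← e, hP]
        congr 1
        apply Finset.filter_congr
        intro S _
        simp [Finset.insert_subset_iff, Finset.singleton_subset_iff]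
      · have e1 : n * (n-1).choose (B-1) = n.choose B * B := by
          have := Nat.add_one_mul_choose_eq (n-1) (B-1)
          have h1 : n - 1 + 1 = n := Nat.succ_pred_eq_of_pos hn
          have h2 : B - 1 + 1 = B := Nat.succ_pred_eq_of_pos hB
          rw [h1, h2] at this
          exact this
        have e2 : (n-1) * (n-2).choose (B-2) = (n-1).choose (B-1) * (B-1) := by
          have := Nat.add_one_mul_choose_eq (n-2) (B-2)
          have h1 : n - 2 + 1 = n - 1 := by omega
          have h2 : B - 2 + 1 = B - 1 := by omega
          rw [h1, h2] at this
          exact this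
        have e3 : ((n-2).choose (B-2) : ℕ) * (n * (n-1)) = n.choose B * B * (B-1) := by
          calc ((n-2).choose (B-2)) * (n * (n-1)) = n * ((n-1) * (n-2).choose (B-2)) := by ring
            _ = n * ((n-1).choose (B-1) * (B-1)) := by rw [e2]
            _ = (n * (n-1).choose (B-1)) * (B-1) := by ring
            _ = n.choose B * B * (B-1) := by rw [e1]
        have c1 : ((n - 1 : ℕ) : ℝ) = (n : ℝ) - 1 := by
          push_cast [Nat.cast_sub (by omega : 1 ≤ n)]; ring
        have c2 : ((B - 1 : ℕ) : ℝ) = (B : ℝ) - 1 := by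
          push_cast [Nat.cast_sub (by omega : 1 ≤ B)]; ring
        have := congrArg (fun m : ℕ => (m : ℝ)) e3
        push_cast [Nat.cast_sub (by omega : 1 ≤ n), Nat.cast_sub (by omega : 1 ≤ B)] at this
        rw [hCnb]
        linarith [this]
  -- T1
  have hT1 : ∑ S ∈ P, (∑ i ∈ S, h i) = N1 * H1 := by
    have step : ∀ S ∈ P, (∑ i ∈ S, h i) = ∑ i, if i ∈ S then h i else 0 := by
      intro S _
      rw [Finset.sum_ite_mem, Finset.univ_inter]
    rw [Finset.sum_congr rfl step, Finset.sum_comm]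
    have inner : ∀ i : Fin n, (∑ S ∈ P, if i ∈ S then h i else 0) = N1 * h i := by
      intro i
      rw [← Finset.sum_filter, Finset.sum_const, hcount1 i, nsmul_eq_mul, hN1def]
    rw [Finset.sum_congr rfl fun i _ => inner i, ← Finset.mul_sum, hH1]
  -- T2
  have hT2 : ∑ S ∈ P, (∑ i ∈ S, h i) ^ 2 = N1 * H2 + (N2:ℝ) * (H1 ^ 2 - H2) := by
    have step : ∀ S ∈ P, (∑ i ∈ S, h i) ^ 2
        = ∑ i, ∑ j, (if i ∈ S ∧ j ∈ S then h i * h j else 0) := by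
      intro S _
      calc (∑ i ∈ S, h i) ^ 2 = ∑ i ∈ S, ∑ j ∈ S, h i * h j := by
            rw [sq, Finset.sum_mul_sum]
        _ = ∑ i ∈ S, ∑ j, (if j ∈ S then h i * h j else 0) := by
            refine Finset.sum_congr rfl fun i _ => ?_
            rw [Finset.sum_ite_mem, Finset.univ_inter]
        _ = ∑ i, (if i ∈ S then ∑ j, (if j ∈ S then h i * h j else 0) else 0) := by
            rw [Finset.sum_ite_mem, Finset.univ_inter]
        _ = ∑ i, ∑ j, (if i ∈ S ∧ j ∈ S then h i * h j else 0) := by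
            refine Finset.sum_congr rfl fun i _ => ?_
            by_cases hi : i ∈ S
            · simp only [hi, if_true, true_and]
            · simp [hi]
    rw [Finset.sum_congr rfl step, Finset.sum_comm]
    have swap2 : ∀ i : Fin n, ∑ S ∈ P, ∑ j, (if i ∈ S ∧ j ∈ S then h i * h j else 0)
        = ∑ j, ∑ S ∈ P, (if i ∈ S ∧ j ∈ S then h i * h j else 0) := fun i => Finset.sum_comm
    rw [Finset.sum_congr rfl fun i _ => swap2 i]
    have inner2 : ∀ i j : Fin n, (∑ S ∈ P, if i ∈ S ∧ j ∈ S then h i * h j else 0)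
        = ((P.filter fun S => i ∈ S ∧ j ∈ S).card : ℝ) * (h i * h j) := by
      intro i j
      rw [← Finset.sum_filter, Finset.sum_const, nsmul_eq_mul]
    rw [Finset.sum_congr rfl fun i _ => Finset.sum_congr rfl fun j _ => inner2 i j]
    have split : ∀ i : Fin n,
        ∑ j, ((P.filter fun S => i ∈ S ∧ j ∈ S).card : ℝ) * (h i * h j)
        = N1 * (h i * h i) + (N2:ℝ) * (h i * (H1 - h i)) := by
      intro i
      rw [Finset.sum_eq_add_sum_sdiff_singleton_of_mem (Finset.mem_univ i)]
      have hdiag : (P.filter fun S => i ∈ S ∧ i ∈ S).card = (n-1).choose (B-1) := by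
        rw [← hcount1 i]
        congr 1
        apply Finset.filter_congr
        intro S _
        simp
      rw [hdiag]
      have hoff : ∑ j ∈ Finset.univ \ {i},
          ((P.filter fun S => i ∈ S ∧ j ∈ S).card : ℝ) * (h i * h j)
          = (N2:ℝ) * (h i * (H1 - h i)) := by
        have e : ∀ j ∈ Finset.univ \ {i},
            ((P.filter fun S => i ∈ S ∧ j ∈ S).card : ℝ) * (h i * h j)
            = (N2:ℝ) * (h i * h j) := by
          intro j hj
          rw [Finset.mem_sdiff, Finset.mem_singleton] at hj
          rw [hcount2 i j (Ne.symm hj.2)]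
        rw [Finset.sum_congr rfl e, ← Finset.mul_sum, ← Finset.mul_sum]
        congr 2
        have := Finset.sum_eq_add_sum_sdiff_singleton_of_mem (Finset.mem_univ i) h
        rw [hH1]
        linarith [this]
      rw [hoff, hN1def]
    rw [Finset.sum_congr rfl fun i _ => split i, Finset.sum_add_distrib,
      ← Finset.mul_sum, ← Finset.mul_sum]
    have e1 : ∑ i, h i * h i = H2 := by
      rw [hH2]
      exact Finset.sum_congr rfl fun i _ => (sq (h i)).symm
    have e2 : ∑ i, h i * (H1 - h i) = H1 ^ 2 - H2 := by
      have : ∀ i : Fin n, h i * (H1 - h i) = h i * H1 - h i * h i := fun i => by ring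
      rw [Finset.sum_congr rfl fun i _ => this i, Finset.sum_sub_distrib, ← Finset.sum_mul,
        e1, ← hH1, sq]
    rw [e1, e2]
  -- sum of g over P
  have sum_g : ∑ S ∈ P, g S
      = Cnb - 2 * c * (N1 * H1) + c ^ 2 * (N1 * H2 + (N2:ℝ) * (H1 ^ 2 - H2)) := by
    have expand : ∀ S ∈ P, g S
        = 1 - 2 * c * (∑ i ∈ S, h i) + c ^ 2 * (∑ i ∈ S, h i) ^ 2 := by
      intro S _
      simp only [hgdef]
      ring
    rw [Finset.sum_congr rfl expand, Finset.sum_add_distrib, Finset.sum_sub_distrib,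
      Finset.sum_const, ← Finset.mul_sum, ← Finset.mul_sum, hT1, hT2]
    have : P.card = n.choose B := by
      rw [hP, Finset.card_powersetCard, Finset.card_univ, Fintype.card_fin]
    rw [this, nsmul_eq_mul, mul_one, hCnb]
  -- integral of g ∘ Bt t
  have int_g : ∀ t, ∫ ω, g (Bt t ω) ∂μ = a := by
    intro t
    have : IsProbabilityMeasure (μ.map (Bt t)) :=
      Measure.isProbabilityMeasure_map (hmeas t).aemeasurable
    rw [← MeasureTheory.integral_map (hmeas t).aemeasurable hg_meas.aestronglyMeasurable,
      MeasureTheory.integral_fintype Integrable.of_finite]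
    have hsingle : ∀ S : Finset (Fin n), (μ.map (Bt t)) {S} = μ {ω | Bt t ω = S} := by
      intro S
      rw [Measure.map_apply (hmeas t) (MeasurableSet.singleton S)]
      rfl
    calc ∑ S : Finset (Fin n), ((μ.map (Bt t)) {S}).toReal • g S
        = ∑ S : Finset (Fin n), (if S.card = B then Cnb⁻¹ * g S else 0) := by
          refine Finset.sum_congr rfl fun S _ => ?_
          rw [hsingle S, hunif t S]
          split_ifs with hcard
          · rw [ENNReal.toReal_inv, ENNReal.toReal_natCast, smul_eq_mul, hCnb]
          · simp
      _ = ∑ S ∈ Finset.univ.filter (fun S : Finset (Fin n) => S.card = B), Cnb⁻¹ * g S :=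
          (Finset.sum_filter _ _).symm
      _ = a := by
          have hfil : Finset.univ.filter (fun S : Finset (Fin n) => S.card = B) = P := by
            rw [hP, Finset.powersetCard_eq_filter, Finset.powerset_univ]
          rw [← Finset.mul_sum, hfil, ha]
  -- integral of products
  have hFmeas : ∀ s : ℕ, Measurable (g ∘ Bt s) := fun s => hg_meas.comp (hmeas s)
  have hFindep : iIndepFun (m := fun _ => (inferInstance : MeasurableSpace ℝ))
      (fun s => g ∘ Bt s) μ := hindep.comp (fun _ => g) (fun _ => hg_meas)
  have int_prod : ∀ t, ∫ ω, ∏ s ∈ Finset.range t, g (Bt s ω) ∂μ = a ^ t := by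
    intro t
    induction t with
    | zero => simp
    | succ t ih =>
      have hind : IndepFun (∏ j ∈ Finset.range t, g ∘ Bt j) (g ∘ Bt t) μ :=
        hFindep.indepFun_prod_range_succ hFmeas t
      have hprodmeas : Measurable (∏ j ∈ Finset.range t, g ∘ Bt j) := by
        have e : (∏ j ∈ Finset.range t, g ∘ Bt j) = fun ω => ∏ j ∈ Finset.range t, g (Bt j ω) := by
          funext ω
          simp [Finset.prod_apply, Function.comp]
        rw [e]
        exact Finset.measurable_prod _ fun j _ => (hFmeas j)
      have hmul := hind.integral_mul_eq_mul_integral hprodmeas.aestronglyMeasurable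
        (hFmeas t).aestronglyMeasurable
      calc ∫ ω, ∏ s ∈ Finset.range (t+1), g (Bt s ω) ∂μ
          = ∫ ω, ((∏ j ∈ Finset.range t, g ∘ Bt j) * (g ∘ Bt t)) ω ∂μ := by
            refine integral_congr_ae (Filter.Eventually.of_forall fun ω => ?_)
            simp [Finset.prod_range_succ, Finset.prod_apply, Function.comp]
        _ = (∫ ω, (∏ j ∈ Finset.range t, g ∘ Bt j) ω ∂μ) * ∫ ω, (g ∘ Bt t) ω ∂μ := hmul
        _ = a ^ t * a := by
            congr 1
            · rw [← ih]
              refine integral_congr_ae (Filter.Eventually.of_forall fun ω => ?_)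
              simp [Finset.prod_apply, Function.comp]
            · exact int_g t
        _ = a ^ (t+1) := (pow_succ a t).symm
  -- moments
  have moment : ∀ (x0 : ℝ) (x : ℕ → Ω → ℝ), (∀ ω, x 0 ω = x0) →
      (∀ t ω, x (t + 1) ω = x t ω - η / ↑B * (∑ i ∈ Bt t ω, h i) * (x t ω - xstar)) →
      ∀ t, ∫ ω, (x t ω - xstar) ^ 2 ∂μ = (x0 - xstar) ^ 2 * a ^ t := by
    intro x0 x hx0 hrec t
    have hform : ∀ t ω, x t ω - xstar
        = (x0 - xstar) * ∏ s ∈ Finset.range t, (1 - c * ∑ i ∈ Bt s ω, h i) := by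
      intro t
      induction t with
      | zero => intro ω; simp [hx0 ω]
      | succ t ih =>
        intro ω
        rw [hrec t ω, Finset.prod_range_succ, ← mul_assoc, ← ih ω, hc]
        ring
    have hsq : ∀ ω, (x t ω - xstar) ^ 2
        = (x0 - xstar) ^ 2 * ∏ s ∈ Finset.range t, g (Bt s ω) := by
      intro ω
      rw [hform t ω, mul_pow, ← Finset.prod_pow]
    rw [integral_congr_ae (Filter.Eventually.of_forall hsq),
      MeasureTheory.integral_const_mul, int_prod t]
  -- positivity of threshold denominator
  have hH1pos : 0 < H1 := by
    rw [hH1]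
    exact Finset.sum_pos (fun i _ => hpos i) ⟨⟨0, hn⟩, Finset.mem_univ _⟩
  have hs2 : (∑ i, (h i - H1 / n) ^ 2) = H2 - H1 ^ 2 / n := by
    have expand : ∀ i : Fin n, (h i - H1/n) ^ 2
        = (h i) ^ 2 - 2 * (H1/n) * h i + (H1/n) ^ 2 := fun i => by ring
    rw [Finset.sum_congr rfl fun i _ => expand i, Finset.sum_add_distrib,
      Finset.sum_sub_distrib, ← Finset.mul_sum, Finset.sum_const, Finset.card_univ,
      Fintype.card_fin, ← hH1, ← hH2, nsmul_eq_mul]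
    field_simp
    ring
  set D : ℝ := (H1 / n) ^ 2 + ((n:ℝ) - B) / (B * ((n:ℝ) - 1)) * ((∑ i, (h i - H1 / n) ^ 2) / n)
    with hD
  clear_value g P Cnb a H1 H2 N1 D
  have hp_nonneg : 0 ≤ ((n:ℝ) - B) / (B * ((n:ℝ) - 1)) := by
    apply div_nonneg
    · have : (B:ℝ) ≤ n := by exact_mod_cast hBn
      linarith
    · have h1n : (1:ℝ) ≤ n := by exact_mod_cast hn
      exact mul_nonneg hB0.le (by linarith)
  have hD_pos : 0 < D := by
    rw [hD]
    have h1 : 0 < (H1 / n) ^ 2 := by positivity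
    have h2 : 0 ≤ ((n:ℝ) - B) / (B * ((n:ℝ) - 1)) * ((∑ i, (h i - H1 / n) ^ 2) / n) := by
      apply mul_nonneg hp_nonneg
      apply div_nonneg (Finset.sum_nonneg fun i _ => sq_nonneg _)
      positivity
    linarith
  -- key identity
  have hE : D * (Cnb * (B:ℝ) ^ 2) = N1 * H2 + (N2:ℝ) * (H1 ^ 2 - H2) := by
    rcases eq_or_lt_of_le (show 1 ≤ n from hn) with hn1 | hn2
    · -- n = 1 (so B = 1)
      have hB1 : B = 1 := by omega
      have hH12 : H1 ^ 2 = H2 := by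
        obtain ⟨i0, hu⟩ := Finset.card_eq_one.mp
          (by rw [Finset.card_univ, Fintype.card_fin, ← hn1] : (Finset.univ : Finset (Fin n)).card = 1)
        rw [hH1, hH2, hu, Finset.sum_singleton, Finset.sum_singleton, sq]
      have hCnb1 : Cnb = 1 := by
        rw [hCnb, hB1, ← hn1]
        norm_num
      have hN11 : N1 = 1 := by
        rw [hN1def, hB1, ← hn1]
        norm_num
      have hDval : D = H1 ^ 2 := by
        rw [hD, hs2, ← hn1, hB1]
        norm_num
      rw [hDval, hCnb1, hN11, hB1, hH12]
      push_cast
      ring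
    · -- n ≥ 2
      have hn1' : (n:ℝ) - 1 ≠ 0 := by
        have : (2:ℝ) ≤ n := by exact_mod_cast hn2
        linarith
      have hN1' : N1 = Cnb * B / n := by
        rw [eq_div_iff hn0]
        exact hN1
      have hN2' : (N2:ℝ) = Cnb * B * ((B:ℝ) - 1) / ((n:ℝ) * ((n:ℝ) - 1)) := by
        rw [eq_div_iff (mul_ne_zero hn0 hn1')]
        exact hN2
      rw [hD, hs2, hN1', hN2']
      field_simp [hB0.ne', hn1']
      ring
  -- the key equivalence
  have key : a ≤ 1 ↔ η ≤ 2 * (H1 / n) / D := by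
    have ha_eq : a = 1 + Cnb⁻¹ * (c * (c * (N1 * H2 + (N2:ℝ) * (H1 ^ 2 - H2))
        - 2 * (N1 * H1))) := by
      rw [ha, sum_g]
      field_simp [hCnb_pos.ne']
      ring
    have hcT : c * (N1 * H2 + (N2:ℝ) * (H1 ^ 2 - H2)) = η * D * (Cnb * B) := by
      rw [hE.symm, hc]
      field_simp
    have hNH : 2 * (N1 * H1) = 2 * (H1 / n) * (Cnb * B) := by
      have hN1' : N1 = Cnb * B / n := by rw [eq_div_iff hn0]; exact hN1
      rw [hN1']
      field_simp
    have hstep : a ≤ 1 ↔ c * (N1 * H2 + (N2:ℝ) * (H1 ^ 2 - H2)) - 2 * (N1 * H1) ≤ 0 := by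
      rw [ha_eq]
      constructor
      · intro h'
        have h1 : c * (c * (N1 * H2 + (N2:ℝ) * (H1 ^ 2 - H2)) - 2 * (N1 * H1)) ≤ 0 := by
          by_contra hq
          push_neg at hq
          have := mul_pos (inv_pos.2 hCnb_pos) hq
          linarith
        by_contra hq
        push_neg at hq
        have := mul_pos hc_pos hq
        linarith
      · intro h'
        have h1 : c * (c * (N1 * H2 + (N2:ℝ) * (H1 ^ 2 - H2)) - 2 * (N1 * H1)) ≤ 0 :=
          mul_nonpos_of_nonneg_of_nonpos hc_pos.le h'
        have h0 : Cnb⁻¹ * (c * (c * (N1 * H2 + (N2:ℝ) * (H1 ^ 2 - H2)) - 2 * (N1 * H1))) ≤ 0 :=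
          mul_nonpos_of_nonneg_of_nonpos (inv_pos.2 hCnb_pos).le h1
        linarith
    rw [hstep, le_div_iff₀ hD_pos, sub_nonpos, hcT, hNH]
    exact ⟨fun hh => le_of_mul_le_mul_right hh (mul_pos hCnb_pos hB0),
      fun hh => mul_le_mul_of_nonneg_right hh (mul_pos hCnb_pos hB0).le⟩
  -- conclude
  rw [← key]
  constructor
  · intro H
    obtain ⟨C, hC⟩ := H (xstar + 1)
      (fun t => Nat.rec (fun _ => xstar + 1)
        (fun t xt ω => xt ω - η / B * (∑ i ∈ Bt t ω, h i) * (xt ω - xstar)) t)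
      (fun ω => rfl) (fun t ω => rfl)
    by_contra hlt
    push_neg at hlt
    obtain ⟨t, ht⟩ := pow_unbounded_of_one_lt C hlt
    have hCt := hC t
    rw [moment (xstar + 1) _ (fun ω => rfl) (fun t ω => rfl) t] at hCt
    have : (xstar + 1 - xstar) ^ 2 = 1 := by ring
    rw [this, one_mul] at hCt
    linarith
  · intro H x0 x hx0 hrec
    refine ⟨(x0 - xstar) ^ 2, fun t => ?_⟩
    rw [moment x0 x hx0 hrec t]
    have hat : a ^ t ≤ 1 := pow_le_one₀ ha_nonneg H
    exact mul_le_of_le_one_right (sq_nonneg _) hat
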